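/- The weighted total variation metric controls differences of means and covariances: Let μ1, μ2 be probability measures on R^n with finite second moments. Then | M(μ1) − M(μ2) | ≤ (1/2) d_g(μ1, μ2), and, with ‖·‖ the operator norm on matrices, ‖ C(μ1) − C(μ2) ‖ ≤ ( 1 + (1/2) | M(μ1) + M(μ2) | ) d_g(μ1, μ2). -/

import Mathlib

open MeasureTheory Matrix
open scoped ENNReal NNReal BigOperators

noncomputable section

/-- Euclidean state space `ℝ^d`. -/
abbrev E (d : ℕ) : Type := EuclideanSpace ℝ (Fin d)

/-- Coerce a plain vector to a point of Euclidean space. -/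
def toE {d : ℕ} (v : Fin d → ℝ) : E d := WithLp.toLp 2 v

/-- Density of the Gaussian distribution `N(m, S)` on `ℝ^d`. -/
def gDensity {d : ℕ} (m : E d) (S : Matrix (Fin d) (Fin d) ℝ) (x : E d) : ℝ :=
  (Real.sqrt ((2 * Real.pi) ^ d * S.det))⁻¹ *
    Real.exp (-(1 / 2) * dotProduct (fun i => x i - m i) (S⁻¹.mulVec fun i => x i - m i))

/-- The Gaussian measure `N(m,S)` on `ℝ^d`. -/
def gMeasure {d : ℕ} (m : E d) (S : Matrix (Fin d) (Fin d) ℝ) : Measure (E d) :=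
  volume.withDensity fun x => ENNReal.ofReal (gDensity m S x)

/-- `μ` is a (nondegenerate) Gaussian measure. -/
def IsGaussianMeasure {d : ℕ} (μ : Measure (E d)) : Prop :=
  ∃ m S, Matrix.PosDef S ∧ μ = gMeasure m S

/-- `q`-th polynomial moment `∫ |x|^q dμ`. -/
def Mq {d : ℕ} (q : ℝ) (μ : Measure (E d)) : ℝ := ∫ x, ‖x‖ ^ q ∂μ

/-- Finiteness of the `q`-th polynomial moment. -/
def HasMoment {d : ℕ} (q : ℝ) (μ : Measure (E d)) : Prop :=
  Integrable (fun x => ‖x‖ ^ q) μ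

/-- Mean vector of `μ`. -/
def meanV {d : ℕ} (μ : Measure (E d)) : E d := toE fun i => ∫ x, x i ∂μ

/-- Covariance matrix of `μ`. -/
def covM {d : ℕ} (μ : Measure (E d)) : Matrix (Fin d) (Fin d) ℝ :=
  Matrix.of fun i j => ∫ x, (x i - meanV μ i) * (x j - meanV μ j) ∂μ

/-- Weighted total variation distance with weight function `g`. -/
def dgW {α : Type*} [MeasurableSpace α] (g : α → ℝ) (μ ν : Measure α) : ℝ :=
  ⨆ f : { f : α → ℝ // Measurable f ∧ ∀ v, |f v| ≤ g v },
    |(∫ v, f.1 v ∂μ) - ∫ v, f.1 v ∂ν|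

/-- Weighted TV metric on `ℝ^d` with weight `g v = 1 + |v|²`. -/
def dg {d : ℕ} (μ ν : Measure (E d)) : ℝ := dgW (fun v => 1 + ‖v‖ ^ 2) μ ν

/-- Weighted TV metric on the product space with weight `g (u,y) = 1 + |u|² + |y|²`. -/
def dgP {du dy : ℕ} (μ ν : Measure (E du × E dy)) : ℝ :=
  dgW (fun v => 1 + ‖v.1‖ ^ 2 + ‖v.2‖ ^ 2) μ ν

/-- Loewner order on symmetric matrices: `A ≼ B`. -/
def matLE {n : Type*} [Fintype n] (A B : Matrix n n ℝ) : Prop := (B - A).PosSemidef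

/-- Prediction operator: law of `Ψ(V) + ξ`, `V ∼ μ`, `ξ ∼ N(0,Σ)` independent. -/
def Pop {du : ℕ} (Ψ : E du → E du) (Sm : Matrix (Fin du) (Fin du) ℝ)
    (μ : Measure (E du)) : Measure (E du) :=
  (μ.prod (gMeasure 0 Sm)).map fun p => Ψ p.1 + p.2

/-- Observation-lifting operator: law of `(U, h(U) + η)`, `U ∼ μ`, `η ∼ N(0,Γ)` independent. -/
def Qop {du dy : ℕ} (h : E du → E dy) (Gm : Matrix (Fin dy) (Fin dy) ℝ)
    (μ : Measure (E du)) : Measure (E du × E dy) :=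
  (μ.prod (gMeasure 0 Gm)).map fun p => (p.1, h p.1 + p.2)

/-- Conditioning (Bayes) operator `B(π; y†)`, defined through the Lebesgue density of `π`. -/
def Bop {du dy : ℕ} (π : Measure (E du × E dy)) (yd : E dy) : Measure (E du) :=
  volume.withDensity fun u =>
    π.rnDeriv volume (u, yd) / ∫⁻ U, π.rnDeriv volume (U, yd)

/-- Mean of the `u`-marginal. -/
def meanU {du dy : ℕ} (π : Measure (E du × E dy)) : E du := toE fun i => ∫ p, p.1 i ∂π

/-- Mean of the `y`-marginal. -/
def meanY {du dy : ℕ} (π : Measure (E du × E dy)) : E dy := toE fun j => ∫ p, p.2 j ∂π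

/-- Covariance block `C^{uu}(π)`. -/
def covUU {du dy : ℕ} (π : Measure (E du × E dy)) : Matrix (Fin du) (Fin du) ℝ :=
  Matrix.of fun i j => ∫ p, (p.1 i - meanU π i) * (p.1 j - meanU π j) ∂π

/-- Cross-covariance block `C^{uy}(π)`. -/
def covUY {du dy : ℕ} (π : Measure (E du × E dy)) : Matrix (Fin du) (Fin dy) ℝ :=
  Matrix.of fun i j => ∫ p, (p.1 i - meanU π i) * (p.2 j - meanY π j) ∂π

/-- Covariance block `C^{yy}(π)`. -/
def covYY {du dy : ℕ} (π : Measure (E du × E dy)) : Matrix (Fin dy) (Fin dy) ℝ :=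
  Matrix.of fun i j => ∫ p, (p.2 i - meanY π i) * (p.2 j - meanY π j) ∂π

/-- Kalman transport operator `T(π; y†)`. -/
def Tkal {du dy : ℕ} (π : Measure (E du × E dy)) (yd : E dy) : Measure (E du) :=
  π.map fun p => p.1 + toE ((covUY π * (covYY π)⁻¹).mulVec fun j => yd j - p.2 j)

/-- Gaussian projection operator on `ℝ^d`. -/
def Gproj {d : ℕ} (μ : Measure (E d)) : Measure (E d) := gMeasure (meanV μ) (covM μ)

/-- Gaussian density on the product space `ℝ^{d_u} × ℝ^{d_y}`. -/
def gDensityP {du dy : ℕ} (m : E du × E dy)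
    (S : Matrix (Fin du ⊕ Fin dy) (Fin du ⊕ Fin dy) ℝ) (x : E du × E dy) : ℝ :=
  (Real.sqrt ((2 * Real.pi) ^ (du + dy) * S.det))⁻¹ *
    Real.exp (-(1 / 2) * dotProduct
      (Sum.elim (fun i => x.1 i - m.1 i) fun j => x.2 j - m.2 j)
      (S⁻¹.mulVec (Sum.elim (fun i => x.1 i - m.1 i) fun j => x.2 j - m.2 j)))

/-- Gaussian measure on the product space. -/
def gMeasureP {du dy : ℕ} (m : E du × E dy)
    (S : Matrix (Fin du ⊕ Fin dy) (Fin du ⊕ Fin dy) ℝ) : Measure (E du × E dy) :=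
  volume.withDensity fun x => ENNReal.ofReal (gDensityP m S x)

/-- Full covariance matrix of a measure on the product space, in block form. -/
def jointCov {du dy : ℕ} (π : Measure (E du × E dy)) :
    Matrix (Fin du ⊕ Fin dy) (Fin du ⊕ Fin dy) ℝ :=
  Matrix.fromBlocks (covUU π) (covUY π) (covUY π)ᵀ (covYY π)

/-- Gaussian projection operator on the product space. -/
def GprojP {du dy : ℕ} (π : Measure (E du × E dy)) : Measure (E du × E dy) :=
  gMeasureP (meanU π, meanY π) (jointCov π)



open scoped RealInnerProductSpace

section MyAux
variable {n : ℕ}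

private lemma my_norm_le_g (v : E n) : ‖v‖ ≤ 1 + ‖v‖ ^ 2 := by
  nlinarith [norm_nonneg v, sq_nonneg (‖v‖ - 1)]

private lemma my_intg_g {μ : Measure (E n)} (h : HasMoment 2 μ) [IsFiniteMeasure μ] :
    Integrable (fun v : E n => 1 + ‖v‖ ^ 2) μ := by
  have h2 : Integrable (fun v : E n => ‖v‖ ^ (2 : ℕ)) μ := by
    unfold HasMoment at h
    convert h using 2 with v
    rw [← Real.rpow_natCast ‖v‖ 2]
    norm_num
  exact (integrable_const 1).add h2

variable {μ μ1 μ2 : Measure (E n)}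

private lemma my_intg_id (hg : Integrable (fun v : E n => 1 + ‖v‖ ^ 2) μ) :
    Integrable (fun v : E n => v) μ := by
  refine hg.mono aestronglyMeasurable_id (ae_of_all _ fun v => ?_)
  have := my_norm_le_g v
  have h0 : (0:ℝ) ≤ 1 + ‖v‖ ^ 2 := by positivity
  simpa [Real.norm_eq_abs, abs_of_nonneg h0] using this

private lemma my_mean_eq (hg : Integrable (fun v : E n => 1 + ‖v‖ ^ 2) μ) :
    ∫ v, v ∂μ = meanV μ := by
  ext i
  have := (EuclideanSpace.proj (𝕜 := ℝ) i).integral_comp_comm (my_intg_id hg)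
  simpa [meanV, toE] using this.symm

private lemma my_integral_inner (hg : Integrable (fun v : E n => 1 + ‖v‖ ^ 2) μ) (x : E n) :
    ∫ v, ⟪x, v⟫ ∂μ = ⟪x, meanV μ⟫ := by
  rw [← my_mean_eq hg]
  exact integral_inner (my_intg_id hg) x

private lemma my_coord_le (v : E n) (i : Fin n) : |v i| ≤ ‖v‖ := by
  have h : ⟪EuclideanSpace.single i (1:ℝ), v⟫ = v i := by
    simp [EuclideanSpace.inner_single_left]
  calc |v i| = |⟪EuclideanSpace.single i (1:ℝ), v⟫| := by rw [h]
  _ ≤ ‖EuclideanSpace.single i (1:ℝ)‖ * ‖v‖ := abs_real_inner_le_norm _ _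
  _ ≤ ‖v‖ := by simp [EuclideanSpace.norm_single]

private lemma my_intg_coord (hg : Integrable (fun v : E n => 1 + ‖v‖ ^ 2) μ) (i : Fin n) :
    Integrable (fun v : E n => v i) μ := by
  refine hg.mono ((EuclideanSpace.proj (𝕜 := ℝ) i).continuous.measurable.aestronglyMeasurable)
    (ae_of_all _ fun v => ?_)
  have h0 : (0:ℝ) ≤ 1 + ‖v‖ ^ 2 := by positivity
  simpa [Real.norm_eq_abs, abs_of_nonneg h0] using (my_coord_le v i).trans (my_norm_le_g v)

private lemma my_intg_coord2 (hg : Integrable (fun v : E n => 1 + ‖v‖ ^ 2) μ) (i j : Fin n) :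
    Integrable (fun v : E n => v i * v j) μ := by
  refine hg.mono (((EuclideanSpace.proj (𝕜 := ℝ) i).continuous.mul
    (EuclideanSpace.proj (𝕜 := ℝ) j).continuous).measurable.aestronglyMeasurable)
    (ae_of_all _ fun v => ?_)
  have h0 : (0:ℝ) ≤ 1 + ‖v‖ ^ 2 := by positivity
  have h1 := my_coord_le v i
  have h2 := my_coord_le v j
  have hb : |v i * v j| ≤ ‖v‖ ^ 2 := by
    rw [abs_mul]
    calc |v i| * |v j| ≤ ‖v‖ * ‖v‖ :=
      mul_le_mul h1 h2 (abs_nonneg _) (norm_nonneg _)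
    _ = ‖v‖ ^ 2 := (sq ‖v‖).symm
  rw [Real.norm_eq_abs (v i * v j), Real.norm_eq_abs, abs_of_nonneg h0]
  nlinarith

private lemma my_dg_nonneg : 0 ≤ dg μ1 μ2 := Real.iSup_nonneg fun f => abs_nonneg _

private lemma my_intg_of_le (hg : Integrable (fun v : E n => 1 + ‖v‖ ^ 2) μ)
    {f : E n → ℝ} (hfm : Measurable f) (hfb : ∀ v, |f v| ≤ 1 + ‖v‖ ^ 2) :
    Integrable f μ := by
  refine hg.mono hfm.aestronglyMeasurable (ae_of_all _ fun v => ?_)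
  rw [Real.norm_eq_abs, Real.norm_eq_abs, abs_of_nonneg (by positivity : (0:ℝ) ≤ 1 + ‖v‖ ^ 2)]
  exact hfb v

private lemma my_dg_le (hg1 : Integrable (fun v : E n => 1 + ‖v‖ ^ 2) μ1)
    (hg2 : Integrable (fun v : E n => 1 + ‖v‖ ^ 2) μ2)
    {f : E n → ℝ} (hfm : Measurable f) (hfb : ∀ v, |f v| ≤ 1 + ‖v‖ ^ 2) :
    |(∫ v, f v ∂μ1) - ∫ v, f v ∂μ2| ≤ dg μ1 μ2 := by
  have key : ∀ (ν : Measure (E n)), Integrable (fun v : E n => 1 + ‖v‖ ^ 2) ν →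
      ∀ (f : E n → ℝ), Measurable f → (∀ v, |f v| ≤ 1 + ‖v‖ ^ 2) →
      |∫ v, f v ∂ν| ≤ ∫ v, 1 + ‖v‖ ^ 2 ∂ν := by
    intro ν hgν f hfm hfb
    calc |∫ v, f v ∂ν| ≤ ∫ v, |f v| ∂ν := by
          simpa [Real.norm_eq_abs] using norm_integral_le_integral_norm (μ := ν) f
    _ ≤ ∫ v, 1 + ‖v‖ ^ 2 ∂ν :=
          integral_mono (my_intg_of_le hgν hfm hfb).abs hgν hfb
  have hbdd : BddAbove (Set.range fun f : { f : E n → ℝ // Measurable f ∧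
      ∀ v, |f v| ≤ 1 + ‖v‖ ^ 2 } => |(∫ v, f.1 v ∂μ1) - ∫ v, f.1 v ∂μ2|) := by
    refine ⟨(∫ v, 1 + ‖v‖ ^ 2 ∂μ1) + ∫ v, 1 + ‖v‖ ^ 2 ∂μ2, ?_⟩
    rintro r ⟨⟨f, hfm', hfb'⟩, rfl⟩
    calc |(∫ v, f v ∂μ1) - ∫ v, f v ∂μ2| ≤ |∫ v, f v ∂μ1| + |∫ v, f v ∂μ2| := abs_sub _ _
    _ ≤ _ := add_le_add (key μ1 hg1 f hfm' hfb') (key μ2 hg2 f hfm' hfb')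
  exact le_ciSup hbdd ⟨f, hfm, hfb⟩

private lemma my_covM_eq (hg : Integrable (fun v : E n => 1 + ‖v‖ ^ 2) μ)
    [IsProbabilityMeasure μ] (i j : Fin n) :
    covM μ i j = (∫ v, v i * v j ∂μ) - meanV μ i * meanV μ j := by
  have hpt : (fun v : E n => (v i - meanV μ i) * (v j - meanV μ j))
      = fun v => (v i * v j - meanV μ i * v j - meanV μ j * v i) + meanV μ i * meanV μ j := by
    funext v; ring
  have h1 := my_intg_coord2 hg i j
  have h2 : Integrable (fun v : E n => meanV μ i * v j) μ :=
    (my_intg_coord hg j).const_mul (meanV μ i)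
  have h3 : Integrable (fun v : E n => meanV μ j * v i) μ :=
    (my_intg_coord hg i).const_mul (meanV μ j)
  have h12 : Integrable (fun v : E n => v i * v j - meanV μ i * v j) μ := h1.sub h2
  have h123 : Integrable (fun v : E n => v i * v j - meanV μ i * v j - meanV μ j * v i) μ :=
    h12.sub h3
  show (∫ v, (v i - meanV μ i) * (v j - meanV μ j) ∂μ) = _
  rw [hpt, integral_add h123 (integrable_const _),
    integral_sub h12 h3, integral_sub h1 h2,
    integral_const_mul, integral_const_mul, integral_const]
  have hmi : (∫ (v : E n), v i ∂μ) = meanV μ i := rfl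
  have hmj : (∫ (v : E n), v j ∂μ) = meanV μ j := rfl
  rw [hmi, hmj]
  simp [measure_univ]
  ring

private lemma my_quad (hg : Integrable (fun v : E n => 1 + ‖v‖ ^ 2) μ)
    [IsProbabilityMeasure μ] (x y : E n) :
    ⟪x, Matrix.toEuclideanCLM (𝕜 := ℝ) (covM μ) y⟫ =
      (∫ v, ⟪x, v⟫ * ⟪y, v⟫ ∂μ) - ⟪x, meanV μ⟫ * ⟪y, meanV μ⟫ := by
  have happ : ∀ i, (Matrix.toEuclideanCLM (𝕜 := ℝ) (covM μ) y) i = ∑ j, covM μ i j * y j := by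
    intro i
    have h := congrFun (Matrix.ofLp_toEuclideanCLM (𝕜 := ℝ) (covM μ) y) i
    simpa [Matrix.mulVec, dotProduct] using h
  have hint : ∫ v, ⟪x, v⟫ * ⟪y, v⟫ ∂μ = ∑ i, ∑ j, (x i * y j) * ∫ v, v i * v j ∂μ := by
    have hpt : (fun v : E n => ⟪x, v⟫ * ⟪y, v⟫)
        = fun v => ∑ i, ∑ j, (x i * y j) * (v i * v j) := by
      funext v
      simp only [PiLp.inner_apply, RCLike.inner_apply, conj_trivial]
      rw [Finset.sum_mul_sum]
      exact Finset.sum_congr rfl fun i _ => Finset.sum_congr rfl fun j _ => by ring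
    rw [hpt, integral_finset_sum _ fun i _ =>
      integrable_finset_sum _ fun j _ => (my_intg_coord2 hg i j).const_mul _]
    refine Finset.sum_congr rfl fun i _ => ?_
    rw [integral_finset_sum _ fun j _ => (my_intg_coord2 hg i j).const_mul _]
    exact Finset.sum_congr rfl fun j _ => integral_const_mul _ _
  rw [hint]
  simp only [PiLp.inner_apply, RCLike.inner_apply, conj_trivial, happ]
  rw [Finset.sum_mul_sum, ← Finset.sum_sub_distrib]
  refine Finset.sum_congr rfl fun i _ => ?_
  rw [Finset.sum_mul, ← Finset.sum_sub_distrib]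
  refine Finset.sum_congr rfl fun j _ => ?_
  rw [my_covM_eq hg i j]
  ring

end MyAux

/-- **The weighted TV metric controls differences of means and covariances** (Lemma B.5).
For probability measures `μ1, μ2` on `ℝ^n` with finite second moments,
`|M(μ1) − M(μ2)| ≤ (1/2) d_g(μ1, μ2)` and
`‖C(μ1) − C(μ2)‖ ≤ (1 + (1/2)|M(μ1) + M(μ2)|) d_g(μ1, μ2)` in the operator norm. -/
theorem dg_controls_mean_and_covariance
    {n : ℕ} (μ1 μ2 : Measure (E n))
    (hμ1P : IsProbabilityMeasure μ1) (hμ2P : IsProbabilityMeasure μ2)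
    (hmom1 : HasMoment 2 μ1) (hmom2 : HasMoment 2 μ2) :
    ‖meanV μ1 - meanV μ2‖ ≤ (1 / 2) * dg μ1 μ2 ∧
    ‖Matrix.toEuclideanCLM (𝕜 := ℝ) (covM μ1 - covM μ2)‖ ≤
      (1 + (1 / 2) * ‖meanV μ1 + meanV μ2‖) * dg μ1 μ2 := by
  haveI := hμ1P; haveI := hμ2P
  have hg1 : Integrable (fun v : E n => 1 + ‖v‖ ^ 2) μ1 := my_intg_g hmom1
  have hg2 : Integrable (fun v : E n => 1 + ‖v‖ ^ 2) μ2 := my_intg_g hmom2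
  have hdgnn : 0 ≤ dg μ1 μ2 := my_dg_nonneg
  -- mean part
  have hmean : ‖meanV μ1 - meanV μ2‖ ≤ (1 / 2) * dg μ1 μ2 := by
    by_cases hw : meanV μ1 - meanV μ2 = 0
    · rw [hw, norm_zero]; linarith
    · set w : E n := meanV μ1 - meanV μ2 with hwdef
      have hwpos : 0 < ‖w‖ := norm_pos_iff.mpr hw
      set f : E n → ℝ := fun v => (2 / ‖w‖) * ⟪w, v⟫ with hf
      have hfm : Measurable f :=
        (continuous_const.mul (continuous_const.inner continuous_id)).measurable
      have hfb : ∀ v, |f v| ≤ 1 + ‖v‖ ^ 2 := by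
        intro v
        have h1 : |⟪w, v⟫| ≤ ‖w‖ * ‖v‖ := abs_real_inner_le_norm _ _
        have h2 : |f v| ≤ 2 * ‖v‖ := by
          have he : |f v| = (2 / ‖w‖) * |⟪w, v⟫| := by
            rw [hf, abs_mul, abs_of_pos (by positivity : (0:ℝ) < 2 / ‖w‖)]
          rw [he]
          calc (2 / ‖w‖) * |⟪w, v⟫| ≤ (2 / ‖w‖) * (‖w‖ * ‖v‖) :=
                mul_le_mul_of_nonneg_left h1 (by positivity)
          _ = 2 * ‖v‖ := by field_simp
        calc |f v| ≤ 2 * ‖v‖ := h2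
        _ ≤ 1 + ‖v‖ ^ 2 := by nlinarith [sq_nonneg (‖v‖ - 1)]
      have hint1 : ∫ v, f v ∂μ1 = (2 / ‖w‖) * ⟪w, meanV μ1⟫ := by
        rw [hf, integral_const_mul, my_integral_inner hg1]
      have hint2 : ∫ v, f v ∂μ2 = (2 / ‖w‖) * ⟪w, meanV μ2⟫ := by
        rw [hf, integral_const_mul, my_integral_inner hg2]
      have hdiff : (∫ v, f v ∂μ1) - ∫ v, f v ∂μ2 = 2 * ‖w‖ := by
        rw [hint1, hint2, ← mul_sub, ← inner_sub_right, ← hwdef,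
          real_inner_self_eq_norm_sq]
        field_simp
      have hle := my_dg_le hg1 hg2 hfm hfb
      rw [hdiff, abs_of_nonneg (by positivity)] at hle
      linarith
  refine ⟨hmean, ?_⟩
  set c : ℝ := (1 + 1 / 2 * ‖meanV μ1 + meanV μ2‖) * dg μ1 μ2 with hcdef
  have hc : 0 ≤ c := mul_nonneg (by positivity) hdgnn
  set T := Matrix.toEuclideanCLM (𝕜 := ℝ) (covM μ1 - covM μ2) with hT
  have hclaim : ∀ x y : E n, ‖x‖ ≤ 1 → ‖y‖ ≤ 1 → |⟪x, T y⟫| ≤ c := by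
    intro x y hx hy
    have hsub : T y = Matrix.toEuclideanCLM (𝕜 := ℝ) (covM μ1) y
        - Matrix.toEuclideanCLM (𝕜 := ℝ) (covM μ2) y := by
      rw [hT, map_sub]; rfl
    rw [hsub, inner_sub_right, my_quad hg1 x y, my_quad hg2 x y]
    set f : E n → ℝ := fun v => ⟪x, v⟫ * ⟪y, v⟫ with hf
    have hfm : Measurable f :=
      ((continuous_const.inner continuous_id).mul
        (continuous_const.inner continuous_id)).measurable
    have hib : ∀ u : E n, |⟪x, u⟫| ≤ ‖u‖ := fun u =>
      (abs_real_inner_le_norm x u).trans (by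
        have := mul_le_mul_of_nonneg_right hx (norm_nonneg u)
        simpa using this)
    have hiy : ∀ u : E n, |⟪y, u⟫| ≤ ‖u‖ := fun u =>
      (abs_real_inner_le_norm y u).trans (by
        have := mul_le_mul_of_nonneg_right hy (norm_nonneg u)
        simpa using this)
    have hfb : ∀ v, |f v| ≤ 1 + ‖v‖ ^ 2 := by
      intro v
      have : |f v| ≤ ‖v‖ * ‖v‖ := by
        rw [hf, abs_mul]
        exact mul_le_mul (hib v) (hiy v) (abs_nonneg _) (norm_nonneg _)
      nlinarith [norm_nonneg v]
    have h1 : |(∫ v, f v ∂μ1) - ∫ v, f v ∂μ2| ≤ dg μ1 μ2 := my_dg_le hg1 hg2 hfm hfb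
    have h2 : |⟪x, meanV μ1⟫ * ⟪y, meanV μ1⟫ - ⟪x, meanV μ2⟫ * ⟪y, meanV μ2⟫|
        ≤ ‖meanV μ1 - meanV μ2‖ * ‖meanV μ1 + meanV μ2‖ := by
      have key : ⟪x, meanV μ1⟫ * ⟪y, meanV μ1⟫ - ⟪x, meanV μ2⟫ * ⟪y, meanV μ2⟫
          = (⟪x, meanV μ1 - meanV μ2⟫ * ⟪y, meanV μ1 + meanV μ2⟫
            + ⟪x, meanV μ1 + meanV μ2⟫ * ⟪y, meanV μ1 - meanV μ2⟫) / 2 := by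
        rw [inner_sub_right, inner_add_right, inner_sub_right, inner_add_right]
        ring
      have e1 : |⟪x, meanV μ1 - meanV μ2⟫ * ⟪y, meanV μ1 + meanV μ2⟫|
          ≤ ‖meanV μ1 - meanV μ2‖ * ‖meanV μ1 + meanV μ2‖ := by
        rw [abs_mul]
        exact mul_le_mul (hib _) (hiy _) (abs_nonneg _) (norm_nonneg _)
      have e2 : |⟪x, meanV μ1 + meanV μ2⟫ * ⟪y, meanV μ1 - meanV μ2⟫|
          ≤ ‖meanV μ1 + meanV μ2‖ * ‖meanV μ1 - meanV μ2‖ := by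
        rw [abs_mul]
        exact mul_le_mul (hib _) (hiy _) (abs_nonneg _) (norm_nonneg _)
      rw [key]
      have htri := abs_add_le (⟪x, meanV μ1 - meanV μ2⟫ * ⟪y, meanV μ1 + meanV μ2⟫)
        (⟪x, meanV μ1 + meanV μ2⟫ * ⟪y, meanV μ1 - meanV μ2⟫)
      rw [abs_div, abs_two]
      rw [div_le_iff₀ (by norm_num : (0:ℝ) < 2)]
      nlinarith
    have hrw : (∫ v, f v ∂μ1) - ⟪x, meanV μ1⟫ * ⟪y, meanV μ1⟫
        - ((∫ v, f v ∂μ2) - ⟪x, meanV μ2⟫ * ⟪y, meanV μ2⟫)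
        = ((∫ v, f v ∂μ1) - ∫ v, f v ∂μ2)
          - (⟪x, meanV μ1⟫ * ⟪y, meanV μ1⟫ - ⟪x, meanV μ2⟫ * ⟪y, meanV μ2⟫) := by ring
    rw [hrw]
    calc |(((∫ v, f v ∂μ1) - ∫ v, f v ∂μ2)
          - (⟪x, meanV μ1⟫ * ⟪y, meanV μ1⟫ - ⟪x, meanV μ2⟫ * ⟪y, meanV μ2⟫))|
        ≤ |(∫ v, f v ∂μ1) - ∫ v, f v ∂μ2|
          + |⟪x, meanV μ1⟫ * ⟪y, meanV μ1⟫ - ⟪x, meanV μ2⟫ * ⟪y, meanV μ2⟫| := abs_sub _ _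
    _ ≤ dg μ1 μ2 + ‖meanV μ1 - meanV μ2‖ * ‖meanV μ1 + meanV μ2‖ := add_le_add h1 h2
    _ ≤ c := by
        rw [hcdef]
        nlinarith [norm_nonneg (meanV μ1 + meanV μ2)]
  refine ContinuousLinearMap.opNorm_le_bound T hc fun y => ?_
  by_cases hTy : T y = 0
  · rw [hTy, norm_zero]
    exact mul_nonneg hc (norm_nonneg _)
  · have hyn : y ≠ 0 := fun h => hTy (by rw [h, map_zero])
    have hy0 : 0 < ‖y‖ := norm_pos_iff.mpr hyn
    have hT0 : 0 < ‖T y‖ := norm_pos_iff.mpr hTy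
    have hx1 : ‖(‖T y‖⁻¹ • T y : E n)‖ ≤ 1 := by
      rw [norm_smul, norm_inv, norm_norm, inv_mul_cancel₀ hT0.ne']
    have hy1 : ‖(‖y‖⁻¹ • y : E n)‖ ≤ 1 := by
      rw [norm_smul, norm_inv, norm_norm, inv_mul_cancel₀ hy0.ne']
    have h := hclaim _ _ hx1 hy1
    rw [T.map_smul, real_inner_smul_left, real_inner_smul_right,
      real_inner_self_eq_norm_sq, abs_of_nonneg (by positivity)] at h
    have heq : ‖T y‖⁻¹ * (‖y‖⁻¹ * ‖T y‖ ^ 2) = ‖T y‖ / ‖y‖ := by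
      field_simp
    rw [heq, div_le_iff₀ hy0] at h
    exact h


end
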